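/- Let n > 1 be odd and let a, b be integers with ab = 2. Then the graded ring ℤ[x₁,x₂]/⟨x₁^(n+1), x₂(a'x₁+x₂)⟩ (for any integer a') is not isomorphic as a graded ring to ℤ[x₁,x₂]/⟨x₁^(n+1−1)(x₁+2x₂), x₂(x₁+x₂)⟩ nor to ℤ[y₁,y₂]/⟨y₁ⁿ(y₁+y₂), y₂(2y₁+y₂)⟩. -/

import Mathlib

open MvPolynomial

def IsGradedIso (I J : Ideal (MvPolynomial (Fin 2) ℤ)) : Prop :=
  ∃ g : Fin 2 → MvPolynomial (Fin 2) ℤ,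
    (∀ i, (g i).IsHomogeneous 1) ∧
    Function.Bijective ⇑(MvPolynomial.aeval (R := ℤ) g) ∧
    Ideal.map (MvPolynomial.aeval (R := ℤ) g) I = J

lemma fin2_deg1 (p : MvPolynomial (Fin 2) ℤ) (hp : p.IsHomogeneous 1) :
    p = C (coeff (Finsupp.single 0 1) p) * X 0 + C (coeff (Finsupp.single 1 1) p) * X 1 := by
  ext m
  rw [coeff_add, coeff_C_mul, coeff_C_mul, coeff_X', coeff_X']
  by_cases h0 : m = Finsupp.single 0 1
  · subst h0
    simp [Finsupp.single_left_inj]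
  by_cases h1 : m = Finsupp.single 1 1
  · subst h1
    simp [Finsupp.single_left_inj]
  · rw [if_neg (fun h => h0 h.symm), if_neg (fun h => h1 h.symm)]
    simp only [mul_zero, add_zero]
    refine hp.coeff_eq_zero ?_
    intro hdeg
    have hd : m 0 + m 1 = 1 := by
      have : m.degree = ∑ i : Fin 2, m i := by
        rw [Finsupp.degree]
        exact Finset.sum_subset (Finset.subset_univ _) (by
          intro x _ hx
          simpa using Finsupp.notMem_support_iff.mp hx)
      rw [this, Fin.sum_univ_two] at hdeg
      exact hdeg
    rcases Nat.eq_zero_or_pos (m 0) with h | h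
    · apply h1
      ext i
      fin_cases i <;> simp [Finsupp.single_apply] <;> omega
    · apply h0
      ext i
      fin_cases i <;> simp [Finsupp.single_apply] <;> omega

noncomputable def phi (t : ℤ) : MvPolynomial (Fin 2) ℤ →ₐ[ℤ] Polynomial ℤ :=
  aeval ![Polynomial.X, Polynomial.C t * Polynomial.X]

lemma phi_coeff_zero (t : ℤ) (A : MvPolynomial (Fin 2) ℤ) :
    (phi t A).coeff 0 = aeval (fun _ => (0:ℤ)) A := by
  rw [Polynomial.coeff_zero_eq_eval_zero, ← Polynomial.coe_aeval_eq_eval]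
  have : (Polynomial.aeval (0:ℤ)).comp (phi t) = aeval (fun _ => (0:ℤ)) := by
    apply MvPolynomial.algHom_ext
    intro i
    fin_cases i <;> simp [phi]
  exact AlgHom.congr_fun this A

lemma key (n : ℕ) (hodd : Odd n) (c d r s e : ℤ) (hre : 1 + r * e = -1) (hse : s + e = 0)
    (he : e ≠ 0)
    (hmem : (C c * X 0 + C d * X 1) ^ (n + 1) ∈
      Ideal.span {(X 0 : MvPolynomial (Fin 2) ℤ) ^ n * (X 0 + C r * X 1),
        X 1 * (C s * X 0 + X 1)}) : c = 0 ∧ d = 0 := by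
  obtain ⟨A, B, hAB⟩ := Ideal.mem_span_pair.mp hmem
  have hG1 : ∀ t : ℤ, phi t ((X 0 : MvPolynomial (Fin 2) ℤ) ^ n * (X 0 + C r * X 1)) =
      Polynomial.C (1 + r * t) * Polynomial.X ^ (n + 1) := by
    intro t
    simp [phi]
    ring
  have hG2 : ∀ t : ℤ, phi t ((X 1 : MvPolynomial (Fin 2) ℤ) * (C s * X 0 + X 1)) =
      Polynomial.C (t * (s + t)) * Polynomial.X ^ 2 := by
    intro t
    simp [phi]
    ring
  have hL : ∀ t : ℤ, phi t ((C c * X 0 + C d * X 1) ^ (n + 1)) =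
      Polynomial.C ((c + d * t) ^ (n + 1)) * Polynomial.X ^ (n + 1) := by
    intro t
    have h1 : phi t (C c * X 0 + C d * X 1) = Polynomial.C (c + d * t) * Polynomial.X := by
      simp [phi]
      ring
    rw [map_pow, h1, mul_pow, ← Polynomial.C_pow]
  have hcoeff : ∀ (P : Polynomial ℤ) (u : ℤ),
      (P * (Polynomial.C u * Polynomial.X ^ (n+1))).coeff (n+1) = u * P.coeff 0 := by
    intro P u
    have h2 := Polynomial.coeff_mul_X_pow (Polynomial.C u * P) (n+1) 0
    rw [zero_add] at h2
    rw [show P * (Polynomial.C u * Polynomial.X ^ (n+1)) =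
      (Polynomial.C u * P) * Polynomial.X ^ (n+1) by ring, h2, Polynomial.coeff_C_mul]
  have heq : ∀ t : ℤ, t * (s + t) = 0 →
      (1 + r * t) * (aeval (fun _ => (0:ℤ)) A) = (c + d * t) ^ (n+1) := by
    intro t ht
    have h := congrArg (phi t) hAB
    rw [map_add, map_mul (phi t) A _, map_mul (phi t) B _, hG1, hG2, hL, ht] at h
    rw [show Polynomial.C (0:ℤ) = 0 from map_zero _, zero_mul, mul_zero, add_zero] at h
    have h' := congrArg (fun p => Polynomial.coeff p (n+1)) h
    beta_reduce at h'
    rw [hcoeff, show Polynomial.C ((c + d * t) ^ (n+1)) * Polynomial.X ^ (n+1)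
      = 1 * (Polynomial.C ((c + d * t) ^ (n+1)) * Polynomial.X ^ (n+1)) by ring, hcoeff] at h'
    rw [phi_coeff_zero] at h'
    simpa using h'
  have h0 := heq 0 (by ring)
  have h1 := heq e (by rw [hse, mul_zero])
  rw [hre] at h1
  rw [mul_zero, add_zero, mul_zero, add_zero, one_mul] at h0
  have hsum : c ^ (n+1) + (c + d * e) ^ (n+1) = 0 := by
    rw [← h0, ← h1]; ring
  have hev : Even (n + 1) := Odd.add_one hodd
  have p1 : (0:ℤ) ≤ c ^ (n+1) := hev.pow_nonneg c
  have p2 : (0:ℤ) ≤ (c + d * e) ^ (n+1) := hev.pow_nonneg _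
  have hc : c ^ (n+1) = 0 := by linarith
  have hcd : (c + d * e) ^ (n+1) = 0 := by linarith
  have hc0 : c = 0 := pow_eq_zero_iff (n := n+1) (by omega) |>.mp hc
  have hde : c + d * e = 0 := pow_eq_zero_iff (n := n+1) (by omega) |>.mp hcd
  refine ⟨hc0, ?_⟩
  rw [hc0, zero_add] at hde
  exact (mul_eq_zero.mp hde).resolve_right he

lemma aux (n : ℕ) (hodd : Odd n) (a' r s e : ℤ) (hre : 1 + r * e = -1) (hse : s + e = 0)
    (he : e ≠ 0) :
    ¬ IsGradedIso
        (Ideal.span {(X 0 : MvPolynomial (Fin 2) ℤ) ^ (n + 1), X 1 * (C a' * X 0 + X 1)})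
        (Ideal.span {(X 0 : MvPolynomial (Fin 2) ℤ) ^ n * (X 0 + C r * X 1),
          X 1 * (C s * X 0 + X 1)}) := by
  rintro ⟨g, hhom, hbij, hmap⟩
  have hXmem : (X 0 : MvPolynomial (Fin 2) ℤ) ^ (n + 1) ∈
      Ideal.span {(X 0 : MvPolynomial (Fin 2) ℤ) ^ (n + 1), X 1 * (C a' * X 0 + X 1)} :=
    Ideal.subset_span (Set.mem_insert _ _)
  have h1 := Ideal.mem_map_of_mem (MvPolynomial.aeval (R := ℤ) g) hXmem
  rw [hmap, map_pow, aeval_X] at h1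
  have hg0 := fin2_deg1 (g 0) (hhom 0)
  rw [hg0] at h1
  obtain ⟨hc, hd⟩ := key n hodd _ _ r s e hre hse he h1
  have hg00 : g 0 = 0 := by rw [hg0, hc, hd]; simp
  have hx : (MvPolynomial.aeval (R := ℤ) g) (X 0) = (MvPolynomial.aeval (R := ℤ) g) 0 := by
    rw [aeval_X, hg00, map_zero]
  exact MvPolynomial.X_ne_zero 0 (hbij.1 hx)

theorem stmt6 (n : ℕ) (hn : 1 < n) (hodd : Odd n) (a b : ℤ) (hab : a * b = 2) (a' : ℤ) :
    ¬ IsGradedIso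
        (Ideal.span {(X 0 : MvPolynomial (Fin 2) ℤ) ^ (n + 1), X 1 * (C a' * X 0 + X 1)})
        (Ideal.span {(X 0 : MvPolynomial (Fin 2) ℤ) ^ n * (X 0 + 2 * X 1), X 1 * (X 0 + X 1)}) ∧
    ¬ IsGradedIso
        (Ideal.span {(X 0 : MvPolynomial (Fin 2) ℤ) ^ (n + 1), X 1 * (C a' * X 0 + X 1)})
        (Ideal.span {(X 0 : MvPolynomial (Fin 2) ℤ) ^ n * (X 0 + X 1), X 1 * (2 * X 0 + X 1)}) := by
  have e2 : (C (2:ℤ) : MvPolynomial (Fin 2) ℤ) = 2 := by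
    rw [map_ofNat]
  have e1 : (C (1:ℤ) : MvPolynomial (Fin 2) ℤ) = 1 := map_one _
  constructor
  · have h := aux n hodd a' 2 1 (-1) (by ring) (by ring) (by norm_num)
    rw [e1, e2, one_mul] at h
    exact h
  · have h := aux n hodd a' 1 2 (-2) (by ring) (by ring) (by norm_num)
    rw [e1, e2, one_mul] at h
    exact h
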